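/- In characteristic 2, with M_x = (M_x^{(1)} | M_x^{(2)}) an m×n matrix of linear forms in x and C an r×(n-r) matrix of variables, for every J ⊆ {1,...,m} with #J = r+1 and every i ∈ {1,...,n-r}, the polynomial combination (e_i ⊗ V_J(M_x^{(2)})) · vec_col(M_x·(I_{n-r}; C)) equals the minor |M_x|_{J, {i} ∪ {n-r+1,...,n}}; in particular the Minors-modeling polynomials lie in the ideal generated by the Kipnis–Shamir polynomials. -/

import Mathlib

open Matrix MvPolynomial

/-- In characteristic 2: the combination of the Kipnis–Shamir polynomials (the entries
of `M_x·(I_s ; C)`) with coefficients `e_i ⊗ V_J(M_x⁽²⁾)` equals the Minors-modeling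
polynomial `|M_x|_{J, {i} ∪ {last r columns}}`; in particular the Minors polynomials
lie in the ideal generated by the Kipnis–Shamir polynomials.  Here `J` of size `r+1`
is given by an injection `ρ`, and `V_J(M_x⁽²⁾)_{ρ k} = det((M_x⁽²⁾)_{J\{ρk},*})`. -/
theorem statement13 {F : Type*} [Field F] [CharP F 2] (K m s r : ℕ)
    (Mi : Fin K → Matrix (Fin m) (Fin s ⊕ Fin r) F) :
    let R := MvPolynomial (Fin K ⊕ (Fin r × Fin s)) F
    let Mx : Matrix (Fin m) (Fin s ⊕ Fin r) R :=
      Matrix.of fun a b => ∑ i, MvPolynomial.C (Mi i a b) * X (Sum.inl i)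
    let Mx2 : Matrix (Fin m) (Fin r) R := Matrix.of fun a b => Mx a (Sum.inr b)
    let Cm : Matrix (Fin r) (Fin s) R := Matrix.of fun i j => X (Sum.inr (i, j))
    let KS : Matrix (Fin m) (Fin s) R :=
      Mx * Matrix.fromRows (1 : Matrix (Fin s) (Fin s) R) Cm
    ∀ (ρ : Fin (r + 1) → Fin m), Function.Injective ρ → ∀ i : Fin s,
      (∑ k : Fin (r + 1), (Mx2.submatrix (ρ ∘ k.succAbove) id).det * KS (ρ k) i
          = (Mx.submatrix ρ
              (Fin.cases (Sum.inl i) (fun k' => Sum.inr k') :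
                Fin (r + 1) → Fin s ⊕ Fin r)).det) ∧
      (Mx.submatrix ρ
          (Fin.cases (Sum.inl i) (fun k' => Sum.inr k') :
            Fin (r + 1) → Fin s ⊕ Fin r)).det ∈
        Ideal.span {p : R | ∃ ℓ j, p = KS ℓ j} := by
  intro R Mx Mx2 Cm KS ρ hρ i
  haveI : CharP R 2 := inferInstance
  -- Base matrix whose column 0 will be replaced
  set Base : Matrix (Fin (r + 1)) (Fin (r + 1)) R :=
    Matrix.of fun k l => Fin.cases 0 (fun k' => Mx2 (ρ k) k') l with hBase
  -- expansion lemma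
  have expand : ∀ v : Fin (r + 1) → R,
      (Matrix.updateCol Base 0 v).det
        = ∑ k : Fin (r + 1), v k * (Mx2.submatrix (ρ ∘ k.succAbove) id).det := by
    intro v
    rw [Matrix.det_succ_column_zero]
    refine Finset.sum_congr rfl fun k _ => ?_
    have h1 : (-1 : R) ^ (k : ℕ) = 1 := by
      rw [CharTwo.neg_eq (1 : R), one_pow]
    have h2 : (Matrix.updateCol Base 0 v) k 0 = v k := by simp
    have h3 : (Matrix.updateCol Base 0 v).submatrix k.succAbove Fin.succ
        = Mx2.submatrix (ρ ∘ k.succAbove) id := by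
      ext a b
      simp [Matrix.updateCol_apply, Fin.succ_ne_zero, hBase]
    rw [h1, h2, h3, one_mul]
  -- the target determinant as an expansion
  have hRHS : (Mx.submatrix ρ
      (Fin.cases (Sum.inl i) (fun k' => Sum.inr k') :
        Fin (r + 1) → Fin s ⊕ Fin r)).det
      = ∑ k : Fin (r + 1), Mx (ρ k) (Sum.inl i)
          * (Mx2.submatrix (ρ ∘ k.succAbove) id).det := by
    rw [← expand]
    congr 1
    ext a b
    refine Fin.cases ?_ (fun b' => ?_) b
    · simp
    · simp [Matrix.updateCol_apply, Fin.succ_ne_zero, hBase, Mx2]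
  -- duplicate-column vanishing
  have hdup : ∀ j : Fin r,
      (∑ k : Fin (r + 1), Mx2 (ρ k) j * (Mx2.submatrix (ρ ∘ k.succAbove) id).det) = 0 := by
    intro j
    rw [← expand]
    refine Matrix.det_zero_of_column_eq (i := 0) (j := j.succ)
      (Fin.succ_ne_zero j).symm fun k => ?_
    simp [Matrix.updateCol_apply, Fin.succ_ne_zero, hBase]
  -- compute KS entry
  have hKS : ∀ k : Fin (r + 1),
      KS (ρ k) i = Mx (ρ k) (Sum.inl i) + ∑ j : Fin r, Mx2 (ρ k) j * Cm j i := by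
    intro k
    simp only [KS, Matrix.mul_apply, Fintype.sum_sum_type, Matrix.fromRows_apply_inl,
      Matrix.fromRows_apply_inr]
    have h1 : ∑ j : Fin s, Mx (ρ k) (Sum.inl j) * (1 : Matrix (Fin s) (Fin s) R) j i
        = Mx (ρ k) (Sum.inl i) := by simp [Matrix.one_apply]
    rw [h1]
    rfl
  have key : ∑ k : Fin (r + 1), (Mx2.submatrix (ρ ∘ k.succAbove) id).det * KS (ρ k) i
      = (Mx.submatrix ρ
          (Fin.cases (Sum.inl i) (fun k' => Sum.inr k') :
            Fin (r + 1) → Fin s ⊕ Fin r)).det := by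
    rw [hRHS]
    calc ∑ k : Fin (r + 1), (Mx2.submatrix (ρ ∘ k.succAbove) id).det * KS (ρ k) i
        = ∑ k : Fin (r + 1), (Mx (ρ k) (Sum.inl i)
              * (Mx2.submatrix (ρ ∘ k.succAbove) id).det
            + ∑ j : Fin r, Cm j i
                * (Mx2 (ρ k) j * (Mx2.submatrix (ρ ∘ k.succAbove) id).det)) := by
          refine Finset.sum_congr rfl fun k _ => ?_
          rw [hKS k, mul_add, Finset.mul_sum]
          congr 1
          · exact mul_comm _ _
          · exact Finset.sum_congr rfl fun j _ => by ring
      _ = ∑ k : Fin (r + 1), Mx (ρ k) (Sum.inl i)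
              * (Mx2.submatrix (ρ ∘ k.succAbove) id).det
          + ∑ j : Fin r, Cm j i
              * ∑ k : Fin (r + 1), Mx2 (ρ k) j
                  * (Mx2.submatrix (ρ ∘ k.succAbove) id).det := by
          rw [Finset.sum_add_distrib, Finset.sum_comm]
          simp [Finset.mul_sum]
          exact Finset.sum_congr rfl fun j _ => (Finset.mul_sum Finset.univ
            (fun k => Mx2 (ρ k) j * (Mx2.submatrix (ρ ∘ k.succAbove) id).det) (Cm j i)).symm
      _ = ∑ k : Fin (r + 1), Mx (ρ k) (Sum.inl i)
              * (Mx2.submatrix (ρ ∘ k.succAbove) id).det := by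
          simp [hdup]
  refine ⟨key, ?_⟩
  rw [← key]
  refine Ideal.sum_mem _ fun k _ => Ideal.mul_mem_left _ _ ?_
  exact Ideal.subset_span ⟨ρ k, i, rfl⟩
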